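/- For every integer k with 1 ≤ k ≤ 29 and gcd(k, 30) = 1, and for every positive integer K, one has ∑_{n=1}^{K} σ(30n) > ∑_{n=1}^{K} σ(30n + k), where σ denotes the sum-of-divisors function. -/

import Mathlib

open ArithmeticFunction Finset

lemma divisors_filter_le (K m : ℕ) (hm : 0 < m) :
    m.divisors.filter (fun e => e ≤ K) = (Icc 1 K).filter (fun e => e ∣ m) := by
  ext e
  simp only [Finset.mem_filter, Nat.mem_divisors, Finset.mem_Icc]
  constructor
  · rintro ⟨⟨hd, -⟩, hK⟩
    exact ⟨⟨Nat.pos_of_dvd_of_pos hd hm, hK⟩, hd⟩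
  · rintro ⟨⟨-, hK⟩, hd⟩
    exact ⟨⟨hd, hm.ne'⟩, hK⟩

lemma sigma_eq_sum_div (m : ℕ) : sigma 1 m = ∑ e ∈ m.divisors, m / e := by
  rw [sigma_one_apply]
  exact (Nat.sum_div_divisors m (fun d => d)).symm

lemma tail_bound (K m : ℕ) (hm : 0 < m) (hmN : m ≤ 30*K+29) (hcop : Nat.Coprime m 30) :
    ∑ e ∈ m.divisors.filter (fun e => ¬ e ≤ K), m / e ≤ 120 := by
  have hinj : ∀ e ∈ m.divisors.filter (fun e => ¬ e ≤ K),
      ∀ e' ∈ m.divisors.filter (fun e => ¬ e ≤ K), m / e = m / e' → e = e' := by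
    intro e he e' he' h
    simp only [Finset.mem_filter, Nat.mem_divisors] at he he'
    rw [← Nat.div_div_self he.1.1 hm.ne', h, Nat.div_div_self he'.1.1 hm.ne']
  have himg : (m.divisors.filter (fun e => ¬ e ≤ K)).image (fun e => m / e)
      ⊆ (Icc 1 29).filter (fun c => Nat.Coprime c 30) := by
    intro c hc
    simp only [Finset.mem_image, Finset.mem_filter, Nat.mem_divisors, Finset.mem_Icc] at hc ⊢
    obtain ⟨e, ⟨⟨hed, -⟩, heK⟩, rfl⟩ := hc
    have he0 : 0 < e := Nat.pos_of_dvd_of_pos hed hm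
    have h1 : 0 < m / e := Nat.div_pos (Nat.le_of_dvd hm hed) he0
    have h2 : m / e ≤ m / (K+1) := Nat.div_le_div_left (by omega) (by omega)
    have h3 : m / (K+1) < 30 := by
      rw [Nat.div_lt_iff_lt_mul (by omega)]
      omega
    exact ⟨⟨h1, by omega⟩, Nat.Coprime.coprime_dvd_left (Nat.div_dvd_of_dvd hed) hcop⟩
  calc ∑ e ∈ m.divisors.filter (fun e => ¬ e ≤ K), m / e
      = ∑ c ∈ (m.divisors.filter (fun e => ¬ e ≤ K)).image (fun e => m / e), c :=
        (Finset.sum_image (g := fun e => m / e) (f := fun c => c) hinj).symm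
    _ ≤ ∑ c ∈ (Icc 1 29).filter (fun c => Nat.Coprime c 30), c :=
        Finset.sum_le_sum_of_subset himg
    _ = 120 := by decide

lemma rhs_bound (K m : ℕ) (hm : 0 < m) (hmN : m ≤ 30*K+29) (hcop : Nat.Coprime m 30) :
    sigma 1 m ≤ (∑ e ∈ Icc 1 K, if e ∣ m then m / e else 0) + 120 := by
  rw [_root_.sigma_eq_sum_div,
    ← Finset.sum_filter_add_sum_filter_not m.divisors (fun e => e ≤ K) (fun e => m / e)]
  have h1 : ∑ e ∈ m.divisors.filter (fun e => e ≤ K), m / e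
      = ∑ e ∈ Icc 1 K, if e ∣ m then m / e else 0 := by
    rw [divisors_filter_le K m hm, Finset.sum_filter]
  rw [h1]
  exact Nat.add_le_add le_rfl (tail_bound K m hm hmN hcop)

-- counting lemma
lemma card_AP (K k e : ℕ) (he0 : 0 < e) (hcop : Nat.Coprime e 30) :
    ((Icc 1 K).filter (fun n => e ∣ 30*n+k)).card ≤ K / e + 1 := by
  classical
  have key : #((Icc 1 K).filter (fun n => e ∣ 30*n+k)) ≤ #(Finset.range (K/e + 1)) := by
    apply Finset.card_le_card_of_injOn (fun n => (n-1)/e)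
    · intro n hn
      simp only [Finset.coe_filter, Set.mem_setOf_eq, Finset.mem_coe, Finset.mem_filter, Finset.mem_Icc] at hn
      simp only [Finset.mem_coe, Finset.mem_range]
      have : (n-1)/e ≤ K/e := Nat.div_le_div_right (by omega)
      omega
    · intro a ha b hb hab
      simp only [Finset.coe_filter, Set.mem_setOf_eq, Finset.mem_Icc] at ha hb
      have hab' : (a-1)/e = (b-1)/e := hab
      by_contra hne
      rcases lt_trichotomy a b with h | h | h
      · have hdvd : e ∣ 30*(b-a) := by
          have := Nat.dvd_sub hb.2 ha.2
          have heq : 30*b+k - (30*a+k) = 30*(b-a) := by omega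
          rwa [heq] at this
        have hba : e ∣ b - a := hcop.dvd_of_dvd_mul_left hdvd
        have hbae : e ≤ b - a := Nat.le_of_dvd (by omega) hba
        have : (a-1)/e + 1 ≤ (b-1)/e := by
          have h5 : ((a-1)+e)/e ≤ (b-1)/e := Nat.div_le_div_right (by omega)
          rwa [Nat.add_div_right _ he0] at h5
        omega
      · exact hne h
      · have hdvd : e ∣ 30*(a-b) := by
          have := Nat.dvd_sub ha.2 hb.2
          have heq : 30*a+k - (30*b+k) = 30*(a-b) := by omega
          rwa [heq] at this
        have hba : e ∣ a - b := hcop.dvd_of_dvd_mul_left hdvd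
        have hbae : e ≤ a - b := Nat.le_of_dvd (by omega) hba
        have : (b-1)/e + 1 ≤ (a-1)/e := by
          have h5 : ((b-1)+e)/e ≤ (a-1)/e := Nat.div_le_div_right (by omega)
          rwa [Nat.add_div_right _ he0] at h5
        omega
  simpa using key



lemma gauss2 (q : ℕ) : 2 * ∑ j ∈ Icc 1 q, j = q * (q + 1) := by
  induction q with
  | zero => simp
  | succ q ih =>
    rw [Finset.sum_Icc_succ_top (by omega), Nat.mul_add, ih]
    ring

-- value of the LHS per-e inner sum, coprime case
lemma Te_eval (K e : ℕ) (he0 : 0 < e) (hcop : Nat.Coprime e 30) :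
    (∑ n ∈ Icc 1 K, if e ∣ n ∧ Nat.Coprime e 30 then 72 * (n / e) else 0)
      = 36 * (K/e * (K/e + 1)) := by
  have h1 : (∑ n ∈ Icc 1 K, if e ∣ n ∧ Nat.Coprime e 30 then 72 * (n / e) else 0)
      = ∑ n ∈ (Icc 1 K).filter (fun n => e ∣ n), 72 * (n / e) := by
    rw [Finset.sum_filter]
    apply Finset.sum_congr rfl
    intro n _
    by_cases hd : e ∣ n <;> simp [hd, hcop]
  rw [h1]
  have h2 : ∑ n ∈ (Icc 1 K).filter (fun n => e ∣ n), 72 * (n / e)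
      = ∑ j ∈ Icc 1 (K/e), 72 * j := by
    apply Finset.sum_nbij' (fun n => n / e) (fun j => e * j)
    · intro n hn
      simp only [Finset.mem_filter, Finset.mem_Icc] at hn
      simp only [Finset.mem_Icc]
      obtain ⟨⟨h1n, hnK⟩, hd⟩ := hn
      exact ⟨Nat.div_pos (Nat.le_of_dvd (by omega) hd) he0, Nat.div_le_div_right hnK⟩
    · intro j hj
      simp only [Finset.mem_Icc] at hj
      simp only [Finset.mem_filter, Finset.mem_Icc]
      refine ⟨⟨by nlinarith [hj.1], ?_⟩, Dvd.intro j rfl⟩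
      calc e * j ≤ e * (K/e) := Nat.mul_le_mul_left e hj.2
        _ ≤ K := Nat.mul_div_le K e
    · intro n hn
      simp only [Finset.mem_filter, Finset.mem_Icc] at hn
      exact Nat.mul_div_cancel' hn.2
    · intro j hj
      exact Nat.mul_div_cancel_left j he0
    · intro n hn
      rfl
  rw [h2, ← Finset.mul_sum]
  have := gauss2 (K/e)
  omega

lemma key_ineq (q : ℕ) : (q+1) * (30*q+29) ≤ 36*(q*(q+1)) + 51 := by
  have e1 : (q+1)*(30*q+29) = 30*(q*q) + 59*q + 29 := by ring
  have e2 : 36*(q*(q+1)) = 36*(q*q) + 36*q := by ring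
  rcases le_or_gt q 3 with hsm | hlg
  · interval_cases q <;> omega
  · have : 4*q ≤ q*q := Nat.mul_le_mul_right q (by omega)
    omega

-- the key per-e comparison for 2 ≤ e ≤ K
lemma mid_per_e (K k e : ℕ) (hk : Nat.gcd k 30 = 1) (hk2 : k ≤ 29) (he2 : 2 ≤ e) (heK : e ≤ K) :
    (∑ n ∈ Icc 1 K, if e ∣ 30*n+k then (30*n+k)/e else 0)
      ≤ (∑ n ∈ Icc 1 K, if e ∣ n ∧ Nat.Coprime e 30 then 72 * (n / e) else 0) + 51 := by
  classical
  by_cases hcop : Nat.Coprime e 30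
  · have he0 : 0 < e := by omega
    have hKlt : K < e * (K/e) + e := by
      have h := Nat.lt_mul_div_succ K he0
      have h' : e * (K/e + 1) = e * (K/e) + e := by ring
      omega
    have hsum1 : (∑ n ∈ Icc 1 K, if e ∣ 30*n+k then (30*n+k)/e else 0)
        = ∑ n ∈ (Icc 1 K).filter (fun n => e ∣ 30*n+k), (30*n+k)/e := by
      rw [Finset.sum_filter]
    have hterm : ∀ n ∈ (Icc 1 K).filter (fun n => e ∣ 30*n+k),
        (30*n+k)/e ≤ 30*(K/e) + 29 := by
      intro n hn
      simp only [Finset.mem_filter, Finset.mem_Icc] at hn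
      have : (30*n+k)/e < 30*(K/e) + 30 := by
        rw [Nat.div_lt_iff_lt_mul he0]
        have hexp : (30*(K/e)+30)*e = 30*(e*(K/e)) + 30*e := by ring
        omega
      omega
    have hcard : #((Icc 1 K).filter (fun n => e ∣ 30*n+k)) ≤ K/e + 1 := card_AP K k e he0 hcop
    have hsum2 : (∑ n ∈ (Icc 1 K).filter (fun n => e ∣ 30*n+k), (30*n+k)/e)
        ≤ (K/e+1) * (30*(K/e) + 29) := by
      calc (∑ n ∈ (Icc 1 K).filter (fun n => e ∣ 30*n+k), (30*n+k)/e)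
          ≤ #((Icc 1 K).filter (fun n => e ∣ 30*n+k)) • (30*(K/e) + 29) :=
            Finset.sum_le_card_nsmul _ _ _ hterm
        _ = #((Icc 1 K).filter (fun n => e ∣ 30*n+k)) * (30*(K/e) + 29) := by
            rw [smul_eq_mul]
        _ ≤ (K/e+1) * (30*(K/e) + 29) := Nat.mul_le_mul_right _ hcard
    rw [hsum1, Te_eval K e he0 hcop]
    calc (∑ n ∈ (Icc 1 K).filter (fun n => e ∣ 30*n+k), (30*n+k)/e)
        ≤ (K/e+1) * (30*(K/e) + 29) := hsum2
      _ ≤ 36*((K/e)*(K/e+1)) + 51 := key_ineq (K/e)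
  · have hz : ∀ n ∈ Icc 1 K, (if e ∣ 30*n+k then (30*n+k)/e else 0) = 0 := by
      intro n _
      rw [if_neg]
      intro hdvd
      apply hcop
      have h1 : Nat.gcd e 30 ∣ k := by
        have ha : Nat.gcd e 30 ∣ 30*n+k := dvd_trans (Nat.gcd_dvd_left e 30) hdvd
        have hb : Nat.gcd e 30 ∣ 30*n := Dvd.dvd.mul_right ((Nat.gcd_dvd_right e 30)) n
        have := Nat.dvd_sub ha hb
        simpa using this
      have h2 : Nat.gcd e 30 ∣ Nat.gcd k 30 := Nat.dvd_gcd h1 (Nat.gcd_dvd_right e 30)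
      rw [hk] at h2
      exact Nat.dvd_one.mp h2
    rw [Finset.sum_eq_zero hz]
    omega

lemma lhs_per_n (K n : ℕ) (hn1 : 1 ≤ n) (hnK : n ≤ K) :
    (∑ e ∈ Icc 1 K, if e ∣ n ∧ Nat.Coprime e 30 then 72 * (n / e) else 0) ≤ sigma 1 (30*n) := by
  have hn0 : 0 < n := hn1
  have h1 : (∑ e ∈ Icc 1 K, if e ∣ n ∧ Nat.Coprime e 30 then 72 * (n / e) else 0)
      = ∑ e ∈ n.divisors.filter (fun e => Nat.Coprime e 30), 72 * (n / e) := by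
    have hsub0 : n.divisors ⊆ Icc 1 K := by
      intro e he
      simp only [Nat.mem_divisors] at he
      simp only [Finset.mem_Icc]
      exact ⟨Nat.pos_of_dvd_of_pos he.1 hn0, le_trans (Nat.le_of_dvd hn0 he.1) hnK⟩
    have hz : ∀ e ∈ Icc 1 K, e ∉ n.divisors →
        (if e ∣ n ∧ Nat.Coprime e 30 then 72 * (n / e) else 0) = 0 := by
      intro e _ he
      rw [if_neg]
      intro hcon
      exact he (Nat.mem_divisors.mpr ⟨hcon.1, hn0.ne'⟩)
    rw [← Finset.sum_subset hsub0 hz]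
    rw [Finset.sum_filter]
    apply Finset.sum_congr rfl
    intro e he
    have : e ∣ n := (Nat.mem_divisors.mp he).1
    by_cases hc : Nat.Coprime e 30 <;> simp [hc, this]
  rw [h1, _root_.sigma_eq_sum_div]
  -- product set
  set P : Finset (ℕ × ℕ) := (Nat.divisors 30) ×ˢ (n.divisors.filter (fun e => Nat.Coprime e 30)) with hP
  have hinj : ∀ p ∈ P, ∀ p' ∈ P, p.1 * p.2 = p'.1 * p'.2 → p = p' := by
    rintro ⟨d, e⟩ hp ⟨d', e'⟩ hp' h
    simp only [hP, Finset.mem_product, Finset.mem_filter, Nat.mem_divisors] at hp hp'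
    have hd : d ∣ 30 := hp.1.1
    have hd' : d' ∣ 30 := hp'.1.1
    have he : e ∣ n := hp.2.1.1
    have he' : e' ∣ n := hp'.2.1.1
    have hce : Nat.Coprime e 30 := hp.2.2
    have hce' : Nat.Coprime e' 30 := hp'.2.2
    have hdd' : d = d' := by
      apply Nat.dvd_antisymm
      · have : Nat.Coprime d e' := Nat.Coprime.coprime_dvd_left hd hce'.symm
        exact this.dvd_of_dvd_mul_right ⟨e, by simpa [mul_comm] using h.symm⟩
      · have : Nat.Coprime d' e := Nat.Coprime.coprime_dvd_left hd' hce.symm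
        exact this.dvd_of_dvd_mul_right ⟨e', by simpa [mul_comm] using h⟩
    have hd0 : 0 < d := Nat.pos_of_dvd_of_pos hd (by norm_num)
    have hee' : e = e' := by
      subst hdd'
      exact Nat.eq_of_mul_eq_mul_left hd0 h
    simp [hdd', hee']
  have hsub : P.image (fun p => p.1 * p.2) ⊆ (30*n).divisors := by
    intro D hD
    simp only [Finset.mem_image] at hD
    obtain ⟨⟨d, e⟩, hp, rfl⟩ := hD
    simp only [hP, Finset.mem_product, Finset.mem_filter, Nat.mem_divisors] at hp
    exact Nat.mem_divisors.mpr ⟨mul_dvd_mul hp.1.1 hp.2.1.1, by positivity⟩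
  calc ∑ e ∈ n.divisors.filter (fun e => Nat.Coprime e 30), 72 * (n / e)
      = ∑ p ∈ P, (30*n) / (p.1 * p.2) := by
        rw [hP, Finset.sum_product_right]
        apply Finset.sum_congr rfl
        intro e he
        simp only [Finset.mem_filter, Nat.mem_divisors] at he
        have heN : e ∣ n := he.1.1
        have : ∀ d ∈ Nat.divisors 30, (30*n) / (d * e) = (30 / d) * (n / e) := by
          intro d hd
          exact (Nat.div_mul_div_comm (Nat.mem_divisors.mp hd).1 heN).symm
        rw [Finset.sum_congr rfl this, ← Finset.sum_mul]
        have h72 : ∑ d ∈ Nat.divisors 30, 30 / d = 72 := by decide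
        rw [h72]
    _ = ∑ D ∈ P.image (fun p => p.1 * p.2), (30*n) / D := (Finset.sum_image hinj).symm
    _ ≤ ∑ D ∈ (30*n).divisors, (30*n) / D := Finset.sum_le_sum_of_subset hsub


theorem sigma_sum_30n_gt (k : ℕ) (hk1 : 1 ≤ k) (hk2 : k ≤ 29) (hk : Nat.gcd k 30 = 1)
    (K : ℕ) (hK : 0 < K) :
    ∑ n ∈ Finset.Icc 1 K, sigma 1 (30 * n) > ∑ n ∈ Finset.Icc 1 K, sigma 1 (30 * n + k) := by
  rcases le_or_gt K 8 with hsmall | hbig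
  · have hk8 : k = 1 ∨ k = 7 ∨ k = 11 ∨ k = 13 ∨ k = 17 ∨ k = 19 ∨ k = 23 ∨ k = 29 := by
      interval_cases k <;> revert hk <;> decide
    rcases hk8 with rfl|rfl|rfl|rfl|rfl|rfl|rfl|rfl <;> interval_cases K <;> decide
  · -- main case K ≥ 9
    have hcopK : ∀ n : ℕ, Nat.Coprime (30*n+k) 30 := by
      intro n
      have h1 : Nat.Coprime (k + 30*n) 30 := (Nat.coprime_add_mul_left_left k 30 n).mpr hk
      have h2 : 30*n+k = k + 30*n := by ring
      rwa [h2]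
    -- RHS bound
    have hR1 : ∑ n ∈ Icc 1 K, sigma 1 (30*n+k)
        ≤ (∑ n ∈ Icc 1 K, ∑ e ∈ Icc 1 K, if e ∣ 30*n+k then (30*n+k)/e else 0) + 120*K := by
      calc ∑ n ∈ Icc 1 K, sigma 1 (30*n+k)
          ≤ ∑ n ∈ Icc 1 K, ((∑ e ∈ Icc 1 K, if e ∣ 30*n+k then (30*n+k)/e else 0) + 120) := by
            apply Finset.sum_le_sum
            intro n hn
            simp only [Finset.mem_Icc] at hn
            exact rhs_bound K (30*n+k) (by omega) (by omega) (hcopK n)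
        _ = _ := by
            rw [Finset.sum_add_distrib, Finset.sum_const, Nat.card_Icc, smul_eq_mul]
            omega
    have hswapR : (∑ n ∈ Icc 1 K, ∑ e ∈ Icc 1 K, if e ∣ 30*n+k then (30*n+k)/e else 0)
        = ∑ e ∈ Icc 1 K, ∑ n ∈ Icc 1 K, if e ∣ 30*n+k then (30*n+k)/e else 0 :=
      Finset.sum_comm
    have hIcc : Icc 1 K = insert 1 (Icc 2 K) := by
      ext x
      simp only [Finset.mem_insert, Finset.mem_Icc]
      omega
    have hnot : (1:ℕ) ∉ Icc 2 K := by simp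
    have hsplitR : (∑ e ∈ Icc 1 K, ∑ n ∈ Icc 1 K, if e ∣ 30*n+k then (30*n+k)/e else 0)
        = (∑ n ∈ Icc 1 K, if (1:ℕ) ∣ 30*n+k then (30*n+k)/1 else 0)
          + ∑ e ∈ Icc 2 K, ∑ n ∈ Icc 1 K, if e ∣ 30*n+k then (30*n+k)/e else 0 := by
      conv_lhs => rw [hIcc]
      rw [Finset.sum_insert hnot, ← hIcc]
    have hg1 : (∑ n ∈ Icc 1 K, if (1:ℕ) ∣ 30*n+k then (30*n+k)/1 else 0)
        = 15*(K*(K+1)) + k*K := by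
      simp only [Nat.one_dvd, if_true, Nat.div_one]
      rw [Finset.sum_add_distrib, ← Finset.mul_sum, Finset.sum_const, Nat.card_Icc, smul_eq_mul]
      have hg := gauss2 K
      have hc : (K+1-1)*k = k*K := by
        have : K+1-1 = K := by omega
        rw [this, Nat.mul_comm]
      omega
    have hmid : (∑ e ∈ Icc 2 K, ∑ n ∈ Icc 1 K, if e ∣ 30*n+k then (30*n+k)/e else 0)
        ≤ (∑ e ∈ Icc 2 K, ∑ n ∈ Icc 1 K, if e ∣ n ∧ Nat.Coprime e 30 then 72*(n/e) else 0)
          + 51*(K-1) := by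
      calc (∑ e ∈ Icc 2 K, ∑ n ∈ Icc 1 K, if e ∣ 30*n+k then (30*n+k)/e else 0)
          ≤ ∑ e ∈ Icc 2 K,
              ((∑ n ∈ Icc 1 K, if e ∣ n ∧ Nat.Coprime e 30 then 72*(n/e) else 0) + 51) := by
            apply Finset.sum_le_sum
            intro e he
            simp only [Finset.mem_Icc] at he
            exact mid_per_e K k e hk hk2 he.1 he.2
        _ = _ := by
            rw [Finset.sum_add_distrib, Finset.sum_const, Nat.card_Icc, smul_eq_mul]
            omega
    -- LHS bound
    have hL1 : (∑ n ∈ Icc 1 K, ∑ e ∈ Icc 1 K, if e ∣ n ∧ Nat.Coprime e 30 then 72*(n/e) else 0)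
        ≤ ∑ n ∈ Icc 1 K, sigma 1 (30*n) := by
      apply Finset.sum_le_sum
      intro n hn
      simp only [Finset.mem_Icc] at hn
      exact lhs_per_n K n hn.1 hn.2
    have hswapL : (∑ n ∈ Icc 1 K, ∑ e ∈ Icc 1 K, if e ∣ n ∧ Nat.Coprime e 30 then 72*(n/e) else 0)
        = ∑ e ∈ Icc 1 K, ∑ n ∈ Icc 1 K, if e ∣ n ∧ Nat.Coprime e 30 then 72*(n/e) else 0 :=
      Finset.sum_comm
    have hsplitL : (∑ e ∈ Icc 1 K, ∑ n ∈ Icc 1 K, if e ∣ n ∧ Nat.Coprime e 30 then 72*(n/e) else 0)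
        = (∑ n ∈ Icc 1 K, if (1:ℕ) ∣ n ∧ Nat.Coprime 1 30 then 72*(n/1) else 0)
          + ∑ e ∈ Icc 2 K, ∑ n ∈ Icc 1 K, if e ∣ n ∧ Nat.Coprime e 30 then 72*(n/e) else 0 := by
      conv_lhs => rw [hIcc]
      rw [Finset.sum_insert hnot, ← hIcc]
    have hh1 : (∑ n ∈ Icc 1 K, if (1:ℕ) ∣ n ∧ Nat.Coprime 1 30 then 72*(n/1) else 0)
        = 36*(K*(K+1)) := by
      have hcong : ∀ n ∈ Icc 1 K,
          (if (1:ℕ) ∣ n ∧ Nat.Coprime 1 30 then 72*(n/1) else 0) = 72*n := by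
        intro n _
        rw [if_pos ⟨one_dvd n, Nat.coprime_one_left 30⟩, Nat.div_one]
      rw [Finset.sum_congr rfl hcong, ← Finset.mul_sum]
      have hg := gauss2 K
      omega
    -- final arithmetic
    have hkK : k*K ≤ 29*K := Nat.mul_le_mul_right K hk2
    have hPK : 10*K ≤ K*(K+1) := by
      have h1 : 10*K ≤ (K+1)*K := Nat.mul_le_mul_right K (by omega)
      have h2 : (K+1)*K = K*(K+1) := Nat.mul_comm _ _
      omega
    omega
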